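/- For every Q > 0, κ > 1, α ≥ 0 and β > 0 there exist constants Q₁ > 0 depending only on Q and κ, and Q₂ > 0 depending only on Q, κ, α and β, with the following property: whenever (X,d,m) is a metric measure space such that (X,d) is geodesic and m is globally doubling with doubling dimension Q, whenever o ∈ X satisfies m({o}) = 0, and μ is the measure whose density with respect to m is F(x) := m(B_{d(o,x)}(o))^α · d(o,x)^{−β}, then the doubly measured metric space (X,d,m,μ) admits a good covering with parameters Q₁ and Q₂. -/

import Mathlib

open MeasureTheory Metric Set Filter
open scoped ENNReal NNReal Topology

noncomputable section

/-- `g` is an upper gradient of `f`: along every rectifiable curve parametrized by arc length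
(formalized as a `1`-Lipschitz curve defined on an interval `[0, L]`), the variation of `f`
between the endpoints is controlled by the line integral of `g` along the curve. -/
def IsUpperGradient {X : Type*} [MetricSpace X] (f : X → ℝ) (g : X → ℝ≥0∞) : Prop :=
  ∀ L : ℝ, 0 ≤ L → ∀ γ : ℝ → X, LipschitzOnWith 1 γ (Icc 0 L) →
    ENNReal.ofReal |f (γ L) - f (γ 0)| ≤ ∫⁻ u in Icc (0 : ℝ) L, g (γ u)

/-- Membership in `L^p(X, m)` for a real exponent `p`. -/
def MemLpR {X : Type*} [MeasurableSpace X] (m : Measure X) (p : ℝ) (f : X → ℝ) : Prop :=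
  AEMeasurable f m ∧ (∫⁻ x, ENNReal.ofReal |f x| ^ p ∂m) < ∞

/-- The Cheeger `p`-energy of `f`: the infimum of `liminf ∫ gₙ^p dm` over all sequences
`fₙ ∈ L^p` converging to `f` in `L^p` and upper gradients `gₙ` of `fₙ`. -/
def cheegerEnergy {X : Type*} [MetricSpace X] [MeasurableSpace X]
    (m : Measure X) (p : ℝ) (f : X → ℝ) : ℝ≥0∞ :=
  ⨅ (F : ℕ → X → ℝ) (G : ℕ → X → ℝ≥0∞) (_ : ∀ n, MemLpR m p (F n))
    (_ : ∀ n, IsUpperGradient (F n) (G n))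
    (_ : Tendsto (fun n => ∫⁻ x, ENNReal.ofReal |F n x - f x| ^ p ∂m) atTop (𝓝 0)),
    liminf (fun n => ∫⁻ x, G n x ^ p ∂m) atTop

/-- `f ∈ H^{1,p}(X, d, m)`: `f ∈ L^p` and its Cheeger `p`-energy is finite. -/
def MemH1 {X : Type*} [MetricSpace X] [MeasurableSpace X]
    (m : Measure X) (p : ℝ) (f : X → ℝ) : Prop :=
  MemLpR m p f ∧ cheegerEnergy m p f < ∞

/-- The measure `m` is finite and nonzero on balls of finite nonzero radius. -/
def BallRegular {X : Type*} [MetricSpace X] [MeasurableSpace X] (m : Measure X) : Prop :=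
  ∀ (x : X) (r : ℝ), 0 < r → m (ball x r) ≠ 0 ∧ m (ball x r) < ∞

/-- `m` is globally doubling with doubling dimension `Q`, i.e. doubling constant `2 ^ Q`. -/
def DoublingOfDim {X : Type*} [MetricSpace X] [MeasurableSpace X]
    (m : Measure X) (Q : ℝ) : Prop :=
  ∀ (x : X) (r : ℝ), 0 < r → m (ball x (2 * r)) ≤ ENNReal.ofReal (2 ^ Q) * m (ball x r)

/-- The weak `(p,p)` Poincaré inequality with constants `C_P > 0` and `lam ≥ 1`. -/
def WeakPoincare {X : Type*} [MetricSpace X] [MeasurableSpace X]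
    (m : Measure X) (p C_P lam : ℝ) : Prop :=
  ∀ f : X → ℝ, LocallyIntegrable f m →
    ∀ g : X → ℝ≥0∞, Measurable g → IsUpperGradient f g → (∫⁻ x, g x ^ p ∂m) < ∞ →
      ∀ (x : X) (r : ℝ), 0 < r →
        ((∫⁻ y in ball x r, ENNReal.ofReal |f y - (⨍ z in ball x r, f z ∂m)| ^ p ∂m) /
            m (ball x r)) ^ (1 / p) ≤
          ENNReal.ofReal (C_P * r) *
            ((∫⁻ y in ball x (lam * r), g y ^ p ∂m) / m (ball x (lam * r))) ^ (1 / p)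

/-- Reverse doubling at the point `o`: `m(B_R(o))/m(B_r(o)) ≥ C_o (R/r)^η` for `0 < r ≤ R`. -/
def ReverseDoubling {X : Type*} [MetricSpace X] [MeasurableSpace X]
    (m : Measure X) (o : X) (C_o η : ℝ) : Prop :=
  ∀ r R : ℝ, 0 < r → r ≤ R → ENNReal.ofReal (C_o * (R / r) ^ η) * m (ball o r) ≤ m (ball o R)

/-- The weighted measure `μ_{s,t}` with density `m(B_{d(o,x)}(o))^{t/s-1} · d(o,x)^{-t}`
with respect to `m`. -/
def weightMeasure {X : Type*} [MetricSpace X] [MeasurableSpace X]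
    (m : Measure X) (o : X) (s t : ℝ) : Measure X :=
  m.withDensity fun x => m (ball o (dist o x)) ^ (t / s - 1) * ENNReal.ofReal (dist o x) ^ (-t)

/-- A geodesic metric space: any two points are joined by a curve of length equal to their
distance (formalized: a `1`-Lipschitz curve defined on `[0, d(x,y)]` from `x` to `y`). -/
def IsGeodesicSpace (X : Type*) [MetricSpace X] : Prop :=
  ∀ x y : X, ∃ γ : ℝ → X, γ 0 = x ∧ γ (dist x y) = y ∧ LipschitzOnWith 1 γ (Icc 0 (dist x y))

/-- A good covering of the doubly measured metric space `(X, d, m, μ)`, indexed by `I`,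
with parameters `Q₁` and `Q₂`. -/
structure GoodCovering {X : Type*} [MetricSpace X] [MeasurableSpace X]
    (m μ : Measure X) (I : Type*) (Q₁ Q₂ : ℝ) where
  U : I → Set X
  Ustar : I → Set X
  Usharp : I → Set X
  countable : Countable I
  measurable_U : ∀ i, MeasurableSet (U i)
  measurable_Ustar : ∀ i, MeasurableSet (Ustar i)
  measurable_Usharp : ∀ i, MeasurableSet (Usharp i)
  finite_m : ∀ i, m (Usharp i) < ∞
  finite_mu : ∀ i, μ (Usharp i) < ∞
  U_subset_Ustar : ∀ i, U i ⊆ Ustar i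
  Ustar_subset_Usharp : ∀ i, Ustar i ⊆ Usharp i
  cover_m : m (univ \ ⋃ i, U i) = 0
  cover_mu : μ (univ \ ⋃ i, U i) = 0
  overlap_finite : ∀ i, {j : I | (closure (Usharp j) ∩ closure (Usharp i)).Nonempty}.Finite
  overlap_card : ∀ i,
    (Nat.card {j : I | (closure (Usharp j) ∩ closure (Usharp i)).Nonempty} : ℝ) ≤ Q₁
  chain : ∀ i j : I, (closure (U i) ∩ closure (U j)).Nonempty →
    ∃ k : I, U i ∪ U j ⊆ Ustar k ∧
      m (Ustar k) ≤ ENNReal.ofReal Q₂ * min (m (U i)) (m (U j)) ∧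
      μ (Ustar k) ≤ ENNReal.ofReal Q₂ * min (μ (U i)) (μ (U j))


set_option linter.unusedSectionVars false
set_option maxHeartbeats 1600000
section AuxGC

variable {X : Type} [MetricSpace X] [MeasurableSpace X] [BorelSpace X]
  (m : Measure X) (o : X)

/-- f t := m (closedBall o t) -/
lemma aux_f_mono : Monotone (fun t => m (closedBall o t)) :=
  fun _ _ h => measure_mono (closedBall_subset_closedBall h)

lemma aux_f_lt_top (hreg : ∀ (x : X) (r : ℝ), 0 < r → m (ball x r) ≠ 0 ∧ m (ball x r) < ∞)
    (t : ℝ) : m (closedBall o t) < ∞ := by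
  refine lt_of_le_of_lt (measure_mono (closedBall_subset_ball ?_)) (hreg o (|t|+1) ?_).2
  · exact lt_of_le_of_lt (le_abs_self t) (lt_add_one _)
  · positivity

lemma aux_f_pos (hreg : ∀ (x : X) (r : ℝ), 0 < r → m (ball x r) ≠ 0 ∧ m (ball x r) < ∞)
    {t : ℝ} (ht : 0 < t) : 0 < m (closedBall o t) := by
  refine lt_of_lt_of_le ?_ (measure_mono ball_subset_closedBall)
  exact pos_iff_ne_zero.2 (hreg o t ht).1

/-- right continuity consequence -/
lemma aux_le_f (hreg : ∀ (x : X) (r : ℝ), 0 < r → m (ball x r) ≠ 0 ∧ m (ball x r) < ∞)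
    {c : ℝ} {g : ℝ≥0∞} (h : ∀ u, c < u → g ≤ m (closedBall o u)) :
    g ≤ m (closedBall o c) := by
  have hset : closedBall o c = ⋂ n : ℕ, closedBall o (c + 1/(n+1)) := by
    ext x
    simp only [mem_closedBall, mem_iInter]
    constructor
    · intro hx n
      have : (0:ℝ) < 1/(n+1) := by positivity
      linarith
    · intro hx
      by_contra hlt
      push_neg at hlt
      obtain ⟨n, hn⟩ := exists_nat_one_div_lt (show (0:ℝ) < dist x o - c by linarith)
      have := hx n
      linarith
  have hanti : Antitone (fun n : ℕ => closedBall o (c + 1/(n+1))) := by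
    intro a b hab
    apply closedBall_subset_closedBall
    have : (1:ℝ)/(b+1) ≤ 1/(a+1) := by
      apply one_div_le_one_div_of_le <;> [positivity; exact_mod_cast by omega]
    linarith
  have := hanti.measure_iInter (μ := m)
    (fun n => (measurableSet_closedBall).nullMeasurableSet)
    ⟨0, (aux_f_lt_top m o hreg _).ne⟩
  rw [hset, this]
  refine le_iInf fun n => h _ ?_
  have : (0:ℝ) < 1/(n+1) := by positivity
  linarith

lemma aux_ball_le (hc : 0 < c) {g : ℝ≥0∞}
    (h : ∀ u, 0 < u → u < c → m (closedBall o u) ≤ g) :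
    m (ball o c) ≤ g := by
  have hset : ball o c ⊆ ⋃ n : ℕ, closedBall o (c - c/(n+2)) := by
    intro x hx
    simp only [mem_ball] at hx
    simp only [mem_iUnion, mem_closedBall]
    rcases le_or_gt (dist x o) 0 with h0 | h0
    · exact ⟨0, le_trans h0 (by nlinarith)⟩
    obtain ⟨n, hn⟩ := exists_nat_one_div_lt (show (0:ℝ) < (c - dist x o)/c by
      apply div_pos (by linarith) hc)
    refine ⟨n, ?_⟩
    have h2 : c/(n+2) ≤ c * (1/(n+1)) := by
      rw [mul_one_div]
      apply div_le_div_of_nonneg_left hc.le (by positivity)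
      push_cast; linarith
    have h3 : c * ((c - dist x o)/c) = c - dist x o := by field_simp
    nlinarith [mul_lt_mul_of_pos_left hn hc]
  have hmono : Monotone (fun n : ℕ => closedBall o (c - c/(n+2))) := by
    intro a b hab
    apply closedBall_subset_closedBall
    have : c/(b+2) ≤ c/(a+2) := by
      apply div_le_div_of_nonneg_left hc.le (by positivity)
      exact_mod_cast by omega
    linarith
  calc m (ball o c) ≤ m (⋃ n : ℕ, closedBall o (c - c/(n+2))) := measure_mono hset
    _ = ⨆ n : ℕ, m (closedBall o (c - c/(n+2))) := hmono.measure_iUnion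
    _ ≤ g := by
        refine iSup_le fun n => ?_
        rcases le_or_gt (c - c/(n+2)) 0 with h0 | h0
        · calc m (closedBall o (c - c/(n+2))) ≤ m (closedBall o 0) :=
                measure_mono (closedBall_subset_closedBall h0)
            _ ≤ g := by
                have hc2 : (0:ℝ) < c/2 := by positivity
                exact le_trans (measure_mono (closedBall_subset_closedBall hc2.le))
                  (h (c/2) hc2 (by linarith))
        · refine h _ h0 ?_
          have hpos : 0 < c/(n+2) := by positivity
          linarith
/-- geodesic: every distance up to an existing point's distance is realized -/
lemma aux_realize (hgeo : ∀ x y : X, ∃ γ : ℝ → X, γ 0 = x ∧ γ (dist x y) = y ∧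
      LipschitzOnWith 1 γ (Icc 0 (dist x y)))
    (w : X) {u : ℝ} (hu0 : 0 ≤ u) (hu : u ≤ dist o w) : ∃ z : X, dist o z = u := by
  obtain ⟨γ, hγ0, hγ1, hγL⟩ := hgeo o w
  have hcont : ContinuousOn (fun v => dist o (γ v)) (Icc 0 (dist o w)) := by
    have := hγL.continuousOn
    fun_prop
  have h0 : dist o (γ 0) = 0 := by rw [hγ0]; simp
  have h1 : dist o (γ (dist o w)) = dist o w := by rw [hγ1]
  have := intermediate_value_Icc (le_trans hu0 hu) hcont
  rw [h0, h1] at this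
  obtain ⟨v, _, hv⟩ := this ⟨hu0, hu⟩
  exact ⟨γ v, hv⟩

/-- doubling iterated for balls -/
lemma aux_dbl_iter {d : ℝ}
    (hdbl : ∀ (x : X) (r : ℝ), 0 < r → m (ball x (2 * r)) ≤ ENNReal.ofReal d * m (ball x r))
    (x : X) (n : ℕ) {r : ℝ} (hr : 0 < r) :
    m (ball x (2^n * r)) ≤ (ENNReal.ofReal d)^n * m (ball x r) := by
  induction n with
  | zero => simp
  | succ n ih =>
      have h2 : (2:ℝ)^(n+1) * r = 2 * (2^n * r) := by ring
      rw [h2]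
      calc m (ball x (2 * (2^n * r))) ≤ ENNReal.ofReal d * m (ball x (2^n * r)) :=
            hdbl x _ (by positivity)
        _ ≤ ENNReal.ofReal d * ((ENNReal.ofReal d)^n * m (ball x r)) := by
            exact mul_le_mul_right ih _
        _ = (ENNReal.ofReal d)^(n+1) * m (ball x r) := by ring

/-- reverse doubling step -/
lemma aux_RD {d : ℝ} (hd : 1 ≤ d)
    (hdbl : ∀ (x : X) (r : ℝ), 0 < r → m (ball x (2 * r)) ≤ ENNReal.ofReal d * m (ball x r))
    (hgeo : ∀ x y : X, ∃ γ : ℝ → X, γ 0 = x ∧ γ (dist x y) = y ∧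
      LipschitzOnWith 1 γ (Icc 0 (dist x y)))
    (hreg : ∀ (x : X) (r : ℝ), 0 < r → m (ball x r) ≠ 0 ∧ m (ball x r) < ∞)
    {r : ℝ} (hr : 0 < r) (hw : ∃ w : X, 2 * r < dist o w) :
    ENNReal.ofReal (1 + (d^3)⁻¹) * m (closedBall o r) ≤ m (closedBall o (2*r)) := by
  obtain ⟨w, hw⟩ := hw
  -- get z at distance 3r/2
  obtain ⟨z, hz⟩ := aux_realize o hgeo w (show (0:ℝ) ≤ 3/2*r by linarith)
    (by linarith)
  have hD0 : (ENNReal.ofReal d) ≠ 0 := by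
    simp only [ne_eq, ENNReal.ofReal_eq_zero, not_le]; linarith
  have hDt : (ENNReal.ofReal d) ≠ ∞ := ENNReal.ofReal_ne_top
  -- small ball inside annulus
  have hsub : ball z (r/2) ⊆ closedBall o (2*r) \ closedBall o r := by
    intro y hy
    simp only [mem_ball] at hy
    have h1 : dist o y ≤ dist o z + dist z y := dist_triangle _ _ _
    have h2 : dist o z ≤ dist o y + dist y z := dist_triangle _ _ _
    rw [hz] at h1 h2
    rw [dist_comm z y] at h1
    constructor
    · simp only [mem_closedBall, dist_comm y o]; linarith
    · simp only [mem_closedBall, dist_comm y o, not_le]; linarith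
  -- doubling comparison
  have hcmp : m (closedBall o (2*r)) ≤ (ENNReal.ofReal d)^3 * m (ball z (r/2)) := by
    have hsub2 : closedBall o (2*r) ⊆ ball z (2^3 * (r/2)) := by
      intro y hy
      simp only [mem_closedBall, dist_comm y o] at hy
      simp only [mem_ball, dist_comm y z]
      have h1 : dist z y ≤ dist z o + dist o y := dist_triangle _ _ _
      rw [dist_comm z o, hz] at h1
      nlinarith
    calc m (closedBall o (2*r)) ≤ m (ball z (2^3 * (r/2))) := measure_mono hsub2
      _ ≤ (ENNReal.ofReal d)^3 * m (ball z (r/2)) := aux_dbl_iter m hdbl z 3 (by positivity)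
  -- additivity
  have hadd : m (closedBall o r) + m (ball z (r/2)) ≤ m (closedBall o (2*r)) := by
    have hdisj : Disjoint (closedBall o r) (ball z (r/2)) := by
      refine disjoint_left.2 fun y hy1 hy2 => ?_
      exact absurd hy1 (hsub hy2).2
    have := measure_union (μ := m) hdisj.symm measurableSet_closedBall
    calc m (closedBall o r) + m (ball z (r/2)) = m (ball z (r/2) ∪ closedBall o r) := by
          rw [this]; ring
      _ ≤ m (closedBall o (2*r)) := by
          refine measure_mono (union_subset ?_ ?_)
          · exact fun y hy => (hsub hy).1
          · exact closedBall_subset_closedBall (by linarith)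
  -- conclude
  have hball : (ENNReal.ofReal d^3)⁻¹ * m (closedBall o (2*r)) ≤ m (ball z (r/2)) := by
    rw [← ENNReal.div_eq_inv_mul]
    exact ENNReal.div_le_of_le_mul (by rw [mul_comm (ENNReal.ofReal d ^ 3)] at hcmp; exact hcmp)
  have hofr : ENNReal.ofReal (1 + (d^3)⁻¹) = 1 + (ENNReal.ofReal d^3)⁻¹ := by
    rw [ENNReal.ofReal_add (by norm_num) (by positivity), ENNReal.ofReal_one,
      ENNReal.ofReal_inv_of_pos (by positivity), ENNReal.ofReal_pow (by linarith)]
  rw [hofr, add_mul, one_mul]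
  calc m (closedBall o r) + (ENNReal.ofReal d^3)⁻¹ * m (closedBall o r)
      ≤ m (closedBall o r) + (ENNReal.ofReal d^3)⁻¹ * m (closedBall o (2*r)) := by
        refine add_le_add_right (mul_le_mul_right (measure_mono
          (closedBall_subset_closedBall (by linarith))) _) _
    _ ≤ m (closedBall o r) + m (ball z (r/2)) := add_le_add_right hball _
    _ ≤ m (closedBall o (2*r)) := hadd

/-- iterated reverse doubling -/
lemma aux_IT {d : ℝ} (hd : 1 ≤ d)
    (hdbl : ∀ (x : X) (r : ℝ), 0 < r → m (ball x (2 * r)) ≤ ENNReal.ofReal d * m (ball x r))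
    (hgeo : ∀ x y : X, ∃ γ : ℝ → X, γ 0 = x ∧ γ (dist x y) = y ∧
      LipschitzOnWith 1 γ (Icc 0 (dist x y)))
    (hreg : ∀ (x : X) (r : ℝ), 0 < r → m (ball x r) ≠ 0 ∧ m (ball x r) < ∞)
    (n : ℕ) {r : ℝ} (hr : 0 < r) (hw : ∃ w : X, 2^n * r < dist o w) :
    ENNReal.ofReal ((1 + (d^3)⁻¹)^n) * m (closedBall o r) ≤ m (closedBall o (2^n*r)) := by
  induction n with
  | zero => simp
  | succ n ih =>
      obtain ⟨w, hw⟩ := hw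
      have h2n : (0:ℝ) < 2^n * r := by positivity
      have hwd : 2 * (2^n * r) < dist o w := by
        have : (2:ℝ)^(n+1) * r = 2 * (2^n * r) := by ring
        linarith
      have hstep := aux_RD m o hd hdbl hgeo hreg h2n ⟨w, hwd⟩
      have hih := ih ⟨w, by nlinarith [pow_pos (show (0:ℝ) < 2 by norm_num) n, hr]⟩
      have h2 : (2:ℝ)^(n+1) * r = 2 * (2^n * r) := by ring
      rw [h2]
      calc ENNReal.ofReal ((1 + (d^3)⁻¹)^(n+1)) * m (closedBall o r)
          = ENNReal.ofReal (1 + (d^3)⁻¹) * (ENNReal.ofReal ((1 + (d^3)⁻¹)^n)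
            * m (closedBall o r)) := by
            rw [pow_succ, ENNReal.ofReal_mul (by positivity), mul_comm (ENNReal.ofReal _)]
            ring
        _ ≤ ENNReal.ofReal (1 + (d^3)⁻¹) * m (closedBall o (2^n*r)) :=
            mul_le_mul_right hih _
        _ ≤ m (closedBall o (2*(2^n*r))) := hstep

end AuxGC

/-- Existence of good coverings on geodesic doubling spaces, for the weighted
measure with density `m(B_{d(o,x)}(o))^α d(o,x)^{-β}`. -/
theorem good_covering_exists
    (Q κ : ℝ) (hQ : 0 < Q) (hκ : 1 < κ) :
    ∃ Q₁ : ℝ, 0 < Q₁ ∧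
      ∀ α β : ℝ, 0 ≤ α → 0 < β →
        ∃ Q₂ : ℝ, 0 < Q₂ ∧
          ∀ (X : Type) [MetricSpace X] [MeasurableSpace X] [BorelSpace X]
            [TopologicalSpace.SeparableSpace X] (m : Measure X),
            BallRegular m → IsGeodesicSpace X → DoublingOfDim m Q →
            ∀ o : X, m {o} = 0 →
              ∃ I : Type, Nonempty (GoodCovering m
                (m.withDensity fun x =>
                  m (ball o (dist o x)) ^ α * ENNReal.ofReal (dist o x) ^ (-β)) I Q₁ Q₂) := by
  
  classical
  set d : ℝ := 2 ^ Q with hd_def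
  have hd1 : (1:ℝ) ≤ d := Real.one_le_rpow one_le_two hQ.le
  have hd0 : (0:ℝ) < d := by linarith
  have hE1 : (1:ℝ) < 1 + (d^3)⁻¹ := by
    have : (0:ℝ) < (d^3)⁻¹ := by positivity
    linarith
  obtain ⟨n₀, hn₀⟩ : ∃ n : ℕ, 4*d^3 < (1 + (d^3)⁻¹)^n := pow_unbounded_of_one_lt _ hE1
  set Λ : ℝ := 2 ^ n₀ with hΛ_def
  have hΛ1 : (1:ℝ) ≤ Λ := one_le_pow₀ one_le_two
  refine ⟨7, by norm_num, ?_⟩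
  intro α β hα hβ
  set C₂ : ℝ := max (24*d^4) (3*((4*d^(n₀+2))^α * (Λ^3)^β * (16*d^5))) with hC₂_def
  have hC₂pos : 0 < C₂ := lt_of_lt_of_le (by positivity) (le_max_left _ _)
  refine ⟨C₂, hC₂pos, ?_⟩
  intro X _ _ _ _ m hreg hgeo hdbl o ho
  have hreg' : ∀ (x : X) (r : ℝ), 0 < r → m (ball x r) ≠ 0 ∧ m (ball x r) < ∞ := hreg
  have hgeo' : ∀ x y : X, ∃ γ : ℝ → X, γ 0 = x ∧ γ (dist x y) = y ∧
      LipschitzOnWith 1 γ (Icc 0 (dist x y)) := hgeo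
  have hdbl' : ∀ (x : X) (r : ℝ), 0 < r →
      m (ball x (2 * r)) ≤ ENNReal.ofReal d * m (ball x r) := by
    intro x r hr; rw [hd_def]; exact hdbl x r hr
  refine ⟨ℤ, ⟨?_⟩⟩
  -- ENNReal constants
  set D : ℝ≥0∞ := ENNReal.ofReal d with hD_def
  have hD1 : 1 ≤ D := by
    rw [hD_def, ← ENNReal.ofReal_one]
    exact ENNReal.ofReal_le_ofReal hd1
  have hD0 : D ≠ 0 := by positivity
  have hDt : D ≠ ∞ := ENNReal.ofReal_ne_top
  set K : ℝ≥0∞ := 2 * D with hK_def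
  have hK2 : (2:ℝ≥0∞) ≤ K := by
    rw [hK_def]
    exact le_mul_of_one_le_right (by norm_num) hD1
  have hK1 : 1 ≤ K := le_trans (by norm_num) hK2
  have hK0 : K ≠ 0 := by
    intro h; rw [h] at hK1; simp at hK1
  have hKt : K ≠ ∞ := by
    rw [hK_def]; exact ENNReal.mul_ne_top (by norm_num) hDt
  set v : ℝ≥0∞ := m (closedBall o 1) with hv_def
  have hv0 : v ≠ 0 := (aux_f_pos m o hreg' one_pos).ne'
  have hvt : v ≠ ∞ := (aux_f_lt_top m o hreg' 1).ne
  set g : ℤ → ℝ≥0∞ := fun j => v * K ^ j with hg_def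
  have hg0 : ∀ j, g j ≠ 0 := fun j => mul_ne_zero hv0 (ENNReal.zpow_pos hK0 hKt j).ne'
  have hgt : ∀ j, g j ≠ ∞ := fun j => ENNReal.mul_ne_top hvt (ENNReal.zpow_lt_top hK0 hKt j).ne
  have hgmono : ∀ {a b : ℤ}, a ≤ b → g a ≤ g b := by
    intro a b hab
    exact mul_le_mul_right (ENNReal.zpow_le_of_le hK1 hab) v
  have hgsucc : ∀ j, g (j+1) = K * g j := by
    intro j
    have h : K ^ (j+1) = K ^ j * K := by
      rw [ENNReal.zpow_add hK0 hKt j 1, zpow_one]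
    rw [hg_def]; dsimp only; rw [h]; ring
  set T : ℤ → Prop := fun j => K * D * g j < m univ with hT_def
  have hTdown : ∀ {a b : ℤ}, a ≤ b → T b → T a := by
    intro a b hab hb
    exact lt_of_le_of_lt (mul_le_mul_right (hgmono hab) _) hb
  have hKD1 : 1 ≤ K * D := le_trans (by norm_num) (mul_le_mul' hK1 hD1)
  have hgleKD : ∀ j, g j ≤ K * D * g j := fun j =>
    le_mul_of_one_le_left (zero_le) hKD1
  set c : ℤ → ℝ := fun j => sInf {t | 0 < t ∧ g j ≤ m (closedBall o t)} with hc_def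
  -- small closed balls have small measure
  have hsmall : ∀ w : ℝ≥0∞, w ≠ 0 → ∃ t : ℝ, 0 < t ∧ m (closedBall o t) < w := by
    intro w hw
    by_contra hcon
    push_neg at hcon
    have hcap : (⋂ n : ℕ, closedBall o (1/(n+1))) = {o} := by
      ext x
      simp only [mem_iInter, mem_closedBall, mem_singleton_iff]
      constructor
      · intro h
        have hd0' : dist x o ≤ 0 := by
          by_contra hpos
          push_neg at hpos
          obtain ⟨n, hn⟩ := exists_nat_one_div_lt hpos
          exact absurd (h n) (by push_neg; linarith)
        rw [← dist_le_zero]; exact hd0'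
      · intro h; subst h; intro n; simp; positivity
    have hanti : Antitone (fun n : ℕ => closedBall o (1/(n+1))) := by
      intro a b hab
      apply closedBall_subset_closedBall
      apply one_div_le_one_div_of_le (by positivity)
      exact_mod_cast by omega
    have heq := hanti.measure_iInter (μ := m)
      (fun n => measurableSet_closedBall.nullMeasurableSet)
      ⟨0, (aux_f_lt_top m o hreg' _).ne⟩
    rw [hcap, ho] at heq
    have : w ≤ 0 := by
      rw [heq]
      exact le_iInf fun n => hcon _ (by positivity)
    exact hw (le_zero_iff.1 this)
  -- properties of the quantile radii
  have hc_props : ∀ j, T j → 0 < c j ∧ g j ≤ m (closedBall o (c j)) ∧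
      (∀ t, 0 < t → t < c j → m (closedBall o t) < g j) ∧
      m (ball o (c j)) ≤ g j ∧ m (closedBall o (c j)) ≤ D * g j ∧
      (∀ t, 0 < t → g j ≤ m (closedBall o t) → c j ≤ t) := by
    intro j hj
    have huniv : (univ : Set X) = ⋃ n : ℕ, closedBall o (n+1) := by
      ext x
      simp only [mem_univ, true_iff, mem_iUnion, mem_closedBall]
      obtain ⟨n, hn⟩ := exists_nat_ge (dist x o)
      exact ⟨n, by linarith⟩
    have hmono : Monotone (fun n : ℕ => closedBall o ((n:ℝ)+1)) := by
      intro a b hab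
      apply closedBall_subset_closedBall
      exact_mod_cast by omega
    have hgj_lt : g j < ⨆ n : ℕ, m (closedBall o ((n:ℝ)+1)) := by
      rw [← hmono.measure_iUnion, ← huniv]
      exact lt_of_le_of_lt (hgleKD j) hj
    obtain ⟨n, hn⟩ := lt_iSup_iff.1 hgj_lt
    have hSne : {t | 0 < t ∧ g j ≤ m (closedBall o t)}.Nonempty :=
      ⟨(n:ℝ)+1, by positivity, hn.le⟩
    obtain ⟨t₀, ht₀, ht₀'⟩ := hsmall (g j) (hg0 j)
    have hlbS : ∀ t ∈ {t | 0 < t ∧ g j ≤ m (closedBall o t)}, t₀ ≤ t := by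
      intro t ht
      by_contra h
      push_neg at h
      exact absurd ht.2 (not_le.2 (lt_of_le_of_lt (aux_f_mono m o h.le) ht₀'))
    have hbdd : BddBelow {t | 0 < t ∧ g j ≤ m (closedBall o t)} := ⟨t₀, hlbS⟩
    have hcpos : 0 < c j := lt_of_lt_of_le ht₀ (le_csInf hSne hlbS)
    have hub : ∀ u, c j < u → g j ≤ m (closedBall o u) := by
      intro u hu
      obtain ⟨t, htS, htu⟩ := (csInf_lt_iff hbdd hSne).1 hu
      exact le_trans htS.2 (aux_f_mono m o htu.le)
    have hge : g j ≤ m (closedBall o (c j)) := aux_le_f m o hreg' hub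
    have hle_inf : ∀ t, 0 < t → g j ≤ m (closedBall o t) → c j ≤ t := by
      intro t ht hft
      exact csInf_le hbdd ⟨ht, hft⟩
    have hlt : ∀ t, 0 < t → t < c j → m (closedBall o t) < g j := by
      intro t ht htc
      by_contra h
      push_neg at h
      exact absurd (hle_inf t ht h) (not_le.2 htc)
    have hball : m (ball o (c j)) ≤ g j :=
      aux_ball_le m o hcpos (fun u hu huc => (hlt u hu huc).le)
    have hDle : m (closedBall o (c j)) ≤ D * g j := by
      calc m (closedBall o (c j)) ≤ m (ball o (2 * c j)) :=
            measure_mono (closedBall_subset_ball (by linarith))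
        _ ≤ D * m (ball o (c j)) := hdbl' o (c j) hcpos
        _ ≤ D * g j := mul_le_mul_right hball D
    exact ⟨hcpos, hge, hlt, hball, hDle, hle_inf⟩
  have hcmono : ∀ {a b : ℤ}, T a → T b → a < b → c a < c b := by
    intro a b ha hb hab
    have hDK : D * g a < K * g a := by
      refine ENNReal.mul_lt_mul_left (hg0 a) (hgt a) ?_
      rw [hK_def]
      refine lt_of_lt_of_le ?_ (mul_le_mul_left (le_refl 2) D)
      calc D = 1 * D := (one_mul D).symm
        _ < 2 * D := by
            refine ENNReal.mul_lt_mul_left hD0 hDt ?_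
            norm_num
    have h1 : m (closedBall o (c a)) < m (closedBall o (c b)) := by
      calc m (closedBall o (c a)) ≤ D * g a := (hc_props a ha).2.2.2.2.1
        _ < K * g a := hDK
        _ = g (a+1) := (hgsucc a).symm
        _ ≤ g b := hgmono (by omega)
        _ ≤ m (closedBall o (c b)) := (hc_props b hb).2.1
    by_contra h
    push_neg at h
    exact absurd (aux_f_mono m o h) (not_le.2 h1)
  have hcmono' : ∀ {a b : ℤ}, T a → T b → a ≤ b → c a ≤ c b := by
    intro a b ha hb hab
    rcases eq_or_lt_of_le hab with rfl | h
    · exact le_refl _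
    · exact (hcmono ha hb h).le
  have hbeyond : ∀ j, T j → ∀ t, 0 < t → t < c j → ∃ w : X, t < dist o w := by
    intro j hj t ht htc
    by_contra h
    push_neg at h
    have huniv_sub : (univ : Set X) ⊆ closedBall o t := by
      intro w _
      simp only [mem_closedBall, dist_comm w o]
      exact h w
    refine absurd ?_ (lt_irrefl (m univ))
    calc m univ ≤ m (closedBall o t) := measure_mono huniv_sub
      _ < g j := (hc_props j hj).2.2.1 t ht htc
      _ ≤ K*D*g j := hgleKD j
      _ < m univ := hj
  -- strict mult helper
  have hstrict : ∀ (a b : ℝ≥0∞) (j : ℤ), a < b → a * g j < b * g j := by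
    intro a b j h
    exact ENNReal.mul_lt_mul_left (hg0 j) (hgt j) h
  have h43 : ENNReal.ofReal (4*d^3) = 4*D^3 := by
    rw [ENNReal.ofReal_mul (by norm_num), ENNReal.ofReal_pow hd0.le, hD_def]
    norm_num
  have hKDK : K*D*K = ENNReal.ofReal (4*d^3) := by
    rw [h43, hK_def]; ring
  -- E4 : consecutive radii ratio bound
  have hE4 : ∀ j, T j → T (j+1) → c (j+1) ≤ Λ * c j := by
    intro j hj hj1
    by_contra h
    push_neg at h
    have hcpos := (hc_props j hj).1
    have hge := (hc_props j hj).2.1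
    obtain ⟨w, hw⟩ := hbeyond (j+1) hj1 (Λ * c j) (by positivity) h
    have hIT := aux_IT m o hd1 hdbl' hgeo' hreg' n₀ hcpos
      ⟨w, by rw [← hΛ_def]; exact hw⟩
    have hup : m (closedBall o (2^n₀ * c j)) < g (j+1) :=
      (hc_props (j+1) hj1).2.2.1 _ (by positivity) (by rw [← hΛ_def]; exact h)
    have hKg : g (j+1) ≤ ENNReal.ofReal (4*d^3) * g j := by
      rw [hgsucc]
      refine mul_le_mul_left ?_ _
      have hK_eq : K = ENNReal.ofReal (2*d) := by
        rw [ENNReal.ofReal_mul (by norm_num), hK_def, hD_def]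
        norm_num
      rw [hK_eq]
      refine ENNReal.ofReal_le_ofReal ?_
      have h2d : (1:ℝ) ≤ d^2 := one_le_pow₀ hd1
      nlinarith
    refine absurd ?_ (lt_irrefl (g (j+1)))
    calc g (j+1) ≤ ENNReal.ofReal (4*d^3) * g j := hKg
      _ < ENNReal.ofReal ((1 + (d^3)⁻¹)^n₀) * g j :=
          hstrict _ _ j ((ENNReal.ofReal_lt_ofReal_iff (by positivity)).2 hn₀)
      _ ≤ ENNReal.ofReal ((1 + (d^3)⁻¹)^n₀) * m (closedBall o (c j)) :=
          mul_le_mul_right hge _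
      _ ≤ m (closedBall o (2^n₀ * c j)) := hIT
      _ < g (j+1) := hup
  -- E5 : top annulus bounded
  have hKDle : K * D ≤ ENNReal.ofReal (4*d^3) := by
    rw [← hKDK]
    calc K * D = K*D*1 := by ring
      _ ≤ K*D*K := mul_le_mul_right hK1 _
  have hE5 : ∀ j, T j → ¬T (j+1) → ∀ x : X, dist o x ≤ Λ * c j := by
    intro j hj hj1 x
    by_contra h
    push_neg at h
    have hcpos := (hc_props j hj).1
    have hge := (hc_props j hj).2.1
    have hIT := aux_IT m o hd1 hdbl' hgeo' hreg' n₀ hcpos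
      ⟨x, by rw [← hΛ_def]; exact h⟩
    have hmuniv : m univ ≤ ENNReal.ofReal (4*d^3) * g j := by
      have hj1' : m univ ≤ K*D*g (j+1) := not_lt.1 hj1
      calc m univ ≤ K*D*g (j+1) := hj1'
        _ = K*D*(K*g j) := by rw [hgsucc]
        _ = (K*D*K)*g j := by ring
        _ = ENNReal.ofReal (4*d^3) * g j := by rw [hKDK]
    refine absurd ?_ (lt_irrefl (m univ))
    calc m univ ≤ ENNReal.ofReal (4*d^3) * g j := hmuniv
      _ < ENNReal.ofReal ((1 + (d^3)⁻¹)^n₀) * g j :=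
          hstrict _ _ j ((ENNReal.ofReal_lt_ofReal_iff (by positivity)).2 hn₀)
      _ ≤ ENNReal.ofReal ((1 + (d^3)⁻¹)^n₀) * m (closedBall o (c j)) :=
          mul_le_mul_right hge _
      _ ≤ m (closedBall o (2^n₀ * c j)) := hIT
      _ ≤ m univ := measure_mono (subset_univ _)
  -- the annuli
  set U : ℤ → Set X := fun j =>
    {x | T j ∧ c j < dist o x ∧ (T (j+1) → dist o x ≤ c (j+1))} with hU_def
  have hU_empty : ∀ j, ¬T j → U j = ∅ := by
    intro j h
    rw [hU_def]
    ext x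
    simp [h]
  have hdist_cont : Continuous (fun x : X => dist o x) := by fun_prop
  have hUmeas : ∀ j, MeasurableSet (U j) := by
    intro j
    by_cases hj : T j
    · by_cases hj1 : T (j+1)
      · have hset : U j = (fun x : X => dist o x) ⁻¹' (Ioc (c j) (c (j+1))) := by
          rw [hU_def]
          ext x
          simp [hj, hj1, mem_Ioc]
        rw [hset]
        exact hdist_cont.measurable measurableSet_Ioc
      · have hset : U j = (fun x : X => dist o x) ⁻¹' (Ioi (c j)) := by
          rw [hU_def]
          ext x
          simp [hj, hj1, mem_Ioi]
        rw [hset]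
        exact hdist_cont.measurable measurableSet_Ioi
    · rw [hU_empty j hj]; exact MeasurableSet.empty
  -- closure facts
  have hcl_T : ∀ j (x : X), x ∈ closure (U j) → T j := by
    intro j x hx
    by_contra h
    rw [hU_empty j h, closure_empty] at hx
    exact hx
  have hcl_lb : ∀ j (x : X), x ∈ closure (U j) → c j ≤ dist o x := by
    intro j x hx
    have hsub : U j ⊆ {y : X | c j ≤ dist o y} := fun y hy => hy.2.1.le
    have hclosed : IsClosed {y : X | c j ≤ dist o y} :=
      isClosed_le continuous_const hdist_cont
    exact closure_minimal hsub hclosed hx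
  have hcl_ub : ∀ j (x : X), T (j+1) → x ∈ closure (U j) → dist o x ≤ c (j+1) := by
    intro j x hj1 hx
    have hsub : U j ⊆ {y : X | dist o y ≤ c (j+1)} := fun y hy => hy.2.2 hj1
    have hclosed : IsClosed {y : X | dist o y ≤ c (j+1)} :=
      isClosed_le hdist_cont continuous_const
    exact closure_minimal hsub hclosed hx
  have hadj : ∀ (a b : ℤ) (x : X), x ∈ closure (U a) → x ∈ closure (U b) → b ≤ a + 1 := by
    intro a b x ha hb
    by_contra h
    push_neg at h
    have hTa := hcl_T a x ha
    have hTb := hcl_T b x hb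
    have hTa2 : T (a+2) := hTdown (by omega) hTb
    have hTa1 : T (a+1) := hTdown (by omega) hTb
    have h1 := hcl_ub a x hTa1 ha
    have h2 := hcl_lb b x hb
    have h3 : c (a+1) < c (a+2) := hcmono hTa1 hTa2 (by omega)
    have h4 : c (a+2) ≤ c b := hcmono' hTa2 hTb (by omega)
    linarith
  -- measure upper bound on annuli
  have hUm_hi : ∀ j, m (U j) ≤ ENNReal.ofReal (4*d^3) * g j := by
    intro j
    by_cases hj : T j
    · by_cases hj1 : T (j+1)
      · have hsub : U j ⊆ closedBall o (c (j+1)) := by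
          intro y hy
          simp only [mem_closedBall, dist_comm y o]
          exact hy.2.2 hj1
        calc m (U j) ≤ m (closedBall o (c (j+1))) := measure_mono hsub
          _ ≤ D * g (j+1) := (hc_props _ hj1).2.2.2.2.1
          _ = D * (K * g j) := by rw [hgsucc]
          _ = (1*D*K) * g j := by ring
          _ ≤ (K*D*K) * g j := mul_le_mul_left (mul_le_mul_left (mul_le_mul_left hK1 D) K) _
          _ = ENNReal.ofReal (4*d^3) * g j := by rw [hKDK]
      · have hmuniv : m univ ≤ ENNReal.ofReal (4*d^3) * g j := by
          have hj1' : m univ ≤ K*D*g (j+1) := not_lt.1 hj1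
          calc m univ ≤ K*D*g (j+1) := hj1'
            _ = (K*D*K)*g j := by rw [hgsucc]; ring
            _ = ENNReal.ofReal (4*d^3) * g j := by rw [hKDK]
        exact le_trans (measure_mono (subset_univ _)) hmuniv
    · rw [hU_empty j hj]
      simp
  -- measure lower bound on annuli
  have hUm_lo : ∀ j, T j → g j ≤ m (U j) := by
    intro j hj
    obtain ⟨hcpos, hge, hlt, hball, hDle, hinf⟩ := hc_props j hj
    have hgg : g j + m (closedBall o (c j)) ≤ K * g j := by
      calc g j + m (closedBall o (c j)) ≤ g j + D*g j := add_le_add le_rfl hDle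
        _ ≤ D*g j + D*g j := add_le_add (le_mul_of_one_le_left (zero_le) hD1) le_rfl
        _ = 2*D*g j := by ring
        _ = K * g j := by rw [hK_def]
    by_cases hj1 : T (j+1)
    · have hccle : c j ≤ c (j+1) := hcmono' hj hj1 (by omega)
      have hU_eq : U j = closedBall o (c (j+1)) \ closedBall o (c j) := by
        rw [hU_def]
        ext x
        simp only [mem_setOf_eq, mem_diff, mem_closedBall, dist_comm x o]
        constructor
        · rintro ⟨-, h1, h2⟩
          exact ⟨h2 hj1, not_le.2 h1⟩
        · rintro ⟨h1, h2⟩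
          exact ⟨hj, not_le.1 h2, fun _ => h1⟩
      rw [hU_eq, measure_diff (closedBall_subset_closedBall hccle)
        measurableSet_closedBall.nullMeasurableSet (aux_f_lt_top m o hreg' _).ne]
      refine ENNReal.le_sub_of_add_le_right (aux_f_lt_top m o hreg' _).ne ?_
      calc g j + m (closedBall o (c j)) ≤ K * g j := hgg
        _ = g (j+1) := (hgsucc j).symm
        _ ≤ m (closedBall o (c (j+1))) := (hc_props _ hj1).2.1
    · have hU_eq : U j = univ \ closedBall o (c j) := by
        rw [hU_def]
        ext x
        simp only [mem_setOf_eq, mem_diff, mem_univ, true_and, mem_closedBall, dist_comm x o]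
        constructor
        · rintro ⟨-, h1, -⟩
          exact not_le.2 h1
        · intro h1
          exact ⟨hj, not_le.1 h1, fun h => absurd h hj1⟩
      rw [hU_eq, measure_diff (subset_univ _)
        measurableSet_closedBall.nullMeasurableSet (aux_f_lt_top m o hreg' _).ne]
      refine ENNReal.le_sub_of_add_le_right (aux_f_lt_top m o hreg' _).ne ?_
      calc g j + m (closedBall o (c j)) ≤ K * g j := hgg
        _ ≤ K*D*g j := by
            calc K * g j = K*1*g j := by ring
              _ ≤ K*D*g j := mul_le_mul_left (mul_le_mul_right hD1 K) _
        _ ≤ m univ := hj.le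
  -- density bounds
  set F : X → ℝ≥0∞ := fun x =>
    m (ball o (dist o x)) ^ α * ENNReal.ofReal (dist o x) ^ (-β) with hF_def
  set Flo : ℤ → ℝ≥0∞ := fun j => g j ^ α * ENNReal.ofReal (Λ * c j) ^ (-β) with hFlo_def
  set Fhi : ℤ → ℝ≥0∞ := fun j => (D^n₀ * g j) ^ α * ENNReal.ofReal (c j) ^ (-β) with hFhi_def
  have hF_bounds : ∀ j, T j → ∀ x ∈ U j, Flo j ≤ F x ∧ F x ≤ Fhi j := by
    intro j hj x hx
    obtain ⟨hcpos, hge, hlt, hball, hDle, hinf⟩ := hc_props j hj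
    obtain ⟨-, hx1, hx2⟩ := hx
    have hxu : dist o x ≤ Λ * c j := by
      by_cases hj1 : T (j+1)
      · exact le_trans (hx2 hj1) (hE4 j hj hj1)
      · exact hE5 j hj hj1 x
    have hb1 : g j ≤ m (ball o (dist o x)) :=
      le_trans hge (measure_mono (closedBall_subset_ball hx1))
    have hb2 : m (ball o (dist o x)) ≤ D^n₀ * g j := by
      calc m (ball o (dist o x)) ≤ m (ball o (2^n₀ * c j)) := by
            refine measure_mono (ball_subset_ball ?_)
            rw [← hΛ_def]; exact hxu
        _ ≤ D^n₀ * m (ball o (c j)) := by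
            have := aux_dbl_iter m hdbl' o n₀ hcpos
            rw [hD_def]
            exact this
        _ ≤ D^n₀ * g j := mul_le_mul_right hball _
    have hr1 : ENNReal.ofReal (dist o x) ^ (-β) ≤ ENNReal.ofReal (c j) ^ (-β) := by
      rw [ENNReal.rpow_neg, ENNReal.rpow_neg]
      exact ENNReal.inv_le_inv.2
        (ENNReal.rpow_le_rpow (ENNReal.ofReal_le_ofReal hx1.le) hβ.le)
    have hr2 : ENNReal.ofReal (Λ * c j) ^ (-β) ≤ ENNReal.ofReal (dist o x) ^ (-β) := by
      rw [ENNReal.rpow_neg, ENNReal.rpow_neg]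
      exact ENNReal.inv_le_inv.2
        (ENNReal.rpow_le_rpow (ENNReal.ofReal_le_ofReal hxu) hβ.le)
    constructor
    · exact mul_le_mul' (ENNReal.rpow_le_rpow hb1 hα) hr2
    · exact mul_le_mul' (ENNReal.rpow_le_rpow hb2 hα) hr1
  have hFhi_fin : ∀ j, T j → Fhi j < ∞ := by
    intro j hj
    rw [hFhi_def]
    refine ENNReal.mul_lt_top ?_ ?_
    · exact ENNReal.rpow_lt_top_of_nonneg hα
        (ENNReal.mul_ne_top (ENNReal.pow_ne_top hDt) (hgt j))
    · rw [ENNReal.rpow_neg]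
      refine ENNReal.inv_lt_top.2 ?_
      exact ENNReal.rpow_pos (ENNReal.ofReal_pos.2 (hc_props j hj).1) ENNReal.ofReal_ne_top
  set μ : Measure X := m.withDensity F with hμ_def
  have hμ_hi : ∀ j, μ (U j) ≤ Fhi j * (ENNReal.ofReal (4*d^3) * g j) := by
    intro j
    by_cases hj : T j
    · calc μ (U j) = ∫⁻ x in U j, F x ∂m := withDensity_apply F (hUmeas j)
        _ ≤ ∫⁻ _x in U j, Fhi j ∂m :=
            setLIntegral_mono' (hUmeas j) (fun x hx => (hF_bounds j hj x hx).2)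
        _ = Fhi j * m (U j) := setLIntegral_const _ _
        _ ≤ Fhi j * (ENNReal.ofReal (4*d^3) * g j) := mul_le_mul_right (hUm_hi j) _
    · rw [hU_empty j hj]
      simp
  have hμ_lo : ∀ j, T j → Flo j * g j ≤ μ (U j) := by
    intro j hj
    calc Flo j * g j ≤ Flo j * m (U j) := mul_le_mul_right (hUm_lo j hj) _
      _ = ∫⁻ _x in U j, Flo j ∂m := (setLIntegral_const _ _).symm
      _ ≤ ∫⁻ x in U j, F x ∂m :=
          setLIntegral_mono' (hUmeas j) (fun x hx => (hF_bounds j hj x hx).1)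
      _ = μ (U j) := (withDensity_apply F (hUmeas j)).symm
  -- the key comparison between nearby annuli
  have hkey : ∀ a b : ℤ, T a → T b → b ≤ a + 2 → a ≤ b + 2 →
      Fhi a * (ENNReal.ofReal (4*d^3) * g a) ≤
        ENNReal.ofReal ((4*d^(n₀+2))^α * (Λ^3)^β * (16*d^5)) * (Flo b * g b) := by
    intro a b hTa hTb hba hab
    have hca_pos := (hc_props a hTa).1
    have hcb_pos := (hc_props b hTb).1
    have hg4 : ENNReal.ofReal (4*d^2) = K * K := by
      rw [ENNReal.ofReal_mul (by norm_num), ENNReal.ofReal_pow hd0.le, hK_def, hD_def,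
        ENNReal.ofReal_ofNat]
      ring
    have hga : g a ≤ ENNReal.ofReal (4*d^2) * g b := by
      calc g a ≤ g (b+2) := hgmono (by omega)
        _ = K * (K * g b) := by rw [show b+2 = (b+1)+1 by ring, hgsucc, hgsucc]
        _ = ENNReal.ofReal (4*d^2) * g b := by rw [hg4]; ring
    have hcb : c b ≤ Λ^2 * c a := by
      rcases (by omega : b ≤ a ∨ b = a+1 ∨ b = a+2) with h | h | h
      · calc c b ≤ c a := hcmono' hTb hTa h
          _ ≤ Λ^2 * c a := le_mul_of_one_le_left hca_pos.le (by nlinarith)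
      · subst h
        have h1 := hE4 a hTa hTb
        nlinarith
      · subst h
        have hTa1 : T (a+1) := hTdown (by omega) hTb
        have h1 := hE4 a hTa hTa1
        have h2 := hE4 (a+1) hTa1 (by rw [show a+1+1 = a+2 by ring]; exact hTb)
        have hca1_pos := (hc_props (a+1) hTa1).1
        rw [show a+1+1 = a+2 by ring] at h2
        nlinarith
    -- factor 1
    have hf1 : (D^n₀ * g a)^α ≤ ENNReal.ofReal ((4*d^(n₀+2))^α) * (g b)^α := by
      have h1 : D^n₀ * g a ≤ ENNReal.ofReal (4*d^(n₀+2)) * g b := by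
        calc D^n₀ * g a ≤ D^n₀ * (ENNReal.ofReal (4*d^2) * g b) := mul_le_mul_right hga _
          _ = (D^n₀ * ENNReal.ofReal (4*d^2)) * g b := by ring
          _ = ENNReal.ofReal (4*d^(n₀+2)) * g b := by
              congr 1
              rw [hD_def, ← ENNReal.ofReal_pow hd0.le, ← ENNReal.ofReal_mul (by positivity)]
              congr 1
              ring
      calc (D^n₀ * g a)^α ≤ (ENNReal.ofReal (4*d^(n₀+2)) * g b)^α :=
            ENNReal.rpow_le_rpow h1 hα
        _ = ENNReal.ofReal (4*d^(n₀+2))^α * (g b)^α := ENNReal.mul_rpow_of_nonneg _ _ hα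
        _ = ENNReal.ofReal ((4*d^(n₀+2))^α) * (g b)^α := by
            rw [ENNReal.ofReal_rpow_of_pos (by positivity)]
    -- factor 2
    have hf2 : ENNReal.ofReal (c a) ^ (-β) ≤
        ENNReal.ofReal ((Λ^3)^β) * ENNReal.ofReal (Λ * c b) ^ (-β) := by
      have h1 : ENNReal.ofReal (Λ*c b) ≤ ENNReal.ofReal (Λ^3) * ENNReal.ofReal (c a) := by
        rw [← ENNReal.ofReal_mul (by positivity)]
        refine ENNReal.ofReal_le_ofReal ?_
        nlinarith
      have h2 : ENNReal.ofReal (Λ*c b) ^ β ≤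
          ENNReal.ofReal (Λ^3)^β * ENNReal.ofReal (c a)^β :=
        le_trans (ENNReal.rpow_le_rpow h1 hβ.le)
          (le_of_eq (ENNReal.mul_rpow_of_nonneg _ _ hβ.le))
      have hA0 : ENNReal.ofReal (Λ^3)^β ≠ 0 :=
        (ENNReal.rpow_pos (ENNReal.ofReal_pos.2 (by positivity)) ENNReal.ofReal_ne_top).ne'
      have hAt : ENNReal.ofReal (Λ^3)^β ≠ ∞ :=
        (ENNReal.rpow_lt_top_of_nonneg hβ.le ENNReal.ofReal_ne_top).ne
      rw [ENNReal.rpow_neg, ENNReal.rpow_neg]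
      calc (ENNReal.ofReal (c a)^β)⁻¹
          = ENNReal.ofReal (Λ^3)^β * (ENNReal.ofReal (Λ^3)^β * ENNReal.ofReal (c a)^β)⁻¹ := by
            rw [ENNReal.mul_inv (Or.inl hA0) (Or.inl hAt), ← mul_assoc,
              ENNReal.mul_inv_cancel hA0 hAt, one_mul]
        _ ≤ ENNReal.ofReal (Λ^3)^β * (ENNReal.ofReal (Λ*c b)^β)⁻¹ :=
            mul_le_mul_right (ENNReal.inv_le_inv.2 h2) _
        _ = ENNReal.ofReal ((Λ^3)^β) * (ENNReal.ofReal (Λ*c b)^β)⁻¹ := by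
            rw [ENNReal.ofReal_rpow_of_pos (by positivity)]
    -- factor 3
    have hf3 : ENNReal.ofReal (4*d^3) * g a ≤ ENNReal.ofReal (16*d^5) * g b := by
      calc ENNReal.ofReal (4*d^3) * g a
          ≤ ENNReal.ofReal (4*d^3) * (ENNReal.ofReal (4*d^2) * g b) := mul_le_mul_right hga _
        _ = (ENNReal.ofReal (4*d^3) * ENNReal.ofReal (4*d^2)) * g b := by ring
        _ = ENNReal.ofReal (16*d^5) * g b := by
            rw [← ENNReal.ofReal_mul (by positivity)]
            congr 1
            ring
    calc Fhi a * (ENNReal.ofReal (4*d^3) * g a)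
        = (D^n₀ * g a)^α * (ENNReal.ofReal (c a)^(-β)) * (ENNReal.ofReal (4*d^3) * g a) := by
          rw [hFhi_def]
      _ ≤ (ENNReal.ofReal ((4*d^(n₀+2))^α) * (g b)^α) *
          (ENNReal.ofReal ((Λ^3)^β) * ENNReal.ofReal (Λ * c b) ^ (-β)) *
          (ENNReal.ofReal (16*d^5) * g b) := mul_le_mul' (mul_le_mul' hf1 hf2) hf3
      _ = (ENNReal.ofReal ((4*d^(n₀+2))^α) * ENNReal.ofReal ((Λ^3)^β) *
            ENNReal.ofReal (16*d^5)) * (Flo b * g b) := by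
          rw [hFlo_def]
          ring
      _ = ENNReal.ofReal ((4*d^(n₀+2))^α * (Λ^3)^β * (16*d^5)) * (Flo b * g b) := by
          rw [ENNReal.ofReal_mul (q := 16*d^5)
              (by positivity : (0:ℝ) ≤ (4*d^(n₀+2))^α * (Λ^3)^β),
            ENNReal.ofReal_mul (q := (Λ^3)^β)
              (by positivity : (0:ℝ) ≤ (4*d^(n₀+2))^α)]
  -- existence of very small and very large scales
  have hsmallg : ∀ w : ℝ≥0∞, w ≠ 0 → ∃ j : ℤ, K*D*g j < w := by
    intro w hw
    have hB0 : K*D*v ≠ 0 := mul_ne_zero (mul_ne_zero hK0 hD0) hv0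
    have hBt : K*D*v ≠ ∞ := ENNReal.mul_ne_top (ENNReal.mul_ne_top hKt hDt) hvt
    have hdiv0 : w / (K*D*v) ≠ 0 := by
      simp only [ne_eq, ENNReal.div_eq_zero_iff, not_or]
      exact ⟨hw, hBt⟩
    obtain ⟨n, hn⟩ := ENNReal.exists_inv_two_pow_lt hdiv0
    refine ⟨-(n:ℤ), ?_⟩
    have h1 : K * D * g (-(n:ℤ)) = (K*D*v) * K^(-(n:ℤ)) := by
      rw [hg_def]; ring
    have h2 : K^(-(n:ℤ)) ≤ (2:ℝ≥0∞)⁻¹^n := by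
      rw [ENNReal.zpow_neg K, zpow_natCast, ← ENNReal.inv_pow]
      exact ENNReal.inv_le_inv.2 (pow_le_pow_left₀ (zero_le) hK2 n)
    calc K*D*g (-(n:ℤ)) = (K*D*v) * K^(-(n:ℤ)) := h1
      _ ≤ (K*D*v) * (2:ℝ≥0∞)⁻¹^n := mul_le_mul_right h2 _
      _ < (K*D*v) * (w / (K*D*v)) := ENNReal.mul_lt_mul_right hB0 hBt hn
      _ = w := ENNReal.mul_div_cancel hB0 hBt
  have hbig : ∀ w : ℝ≥0∞, w ≠ ∞ → ∃ j : ℤ, w < g j := by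
    intro w hw
    obtain ⟨n, hn⟩ := ENNReal.exists_nat_gt ((ENNReal.div_lt_top hw hv0).ne)
    refine ⟨(n:ℤ), ?_⟩
    have h1 : w < v * n := by
      rw [ENNReal.div_lt_iff (Or.inl hv0) (Or.inl hvt)] at hn
      calc w < (n:ℝ≥0∞) * v := hn
        _ = v * n := mul_comm _ _
    have h2 : (n:ℝ≥0∞) ≤ K^(n:ℤ) := by
      rw [zpow_natCast]
      calc (n:ℝ≥0∞) ≤ (2:ℝ≥0∞)^n := by
            have : (n:ℕ) < 2^n := Nat.lt_two_pow_self
            calc (n:ℝ≥0∞) ≤ ((2^n : ℕ) : ℝ≥0∞) := by exact_mod_cast this.le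
              _ = (2:ℝ≥0∞)^n := by push_cast; ring
        _ ≤ K^n := pow_le_pow_left₀ (zero_le) hK2 n
    calc w < v * n := h1
      _ ≤ v * K^(n:ℤ) := mul_le_mul_right h2 _
      _ = g (n:ℤ) := by rw [hg_def]
  -- covering
  have hcover : ∀ x : X, x ≠ o → x ∈ ⋃ j : ℤ, U j := by
    intro x hxo
    have hs_pos : 0 < dist o x := dist_pos.2 (Ne.symm hxo)
    -- a lower index
    have hj₀ : ∃ j : ℤ, T j ∧ c j < dist o x := by
      have hw0 : m (closedBall o (dist o x / 2)) ≠ 0 :=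
        (aux_f_pos m o hreg' (by linarith)).ne'
      obtain ⟨j, hj⟩ := hsmallg _ hw0
      have hTj : T j := lt_of_lt_of_le hj (measure_mono (subset_univ _))
      have hgle : g j ≤ m (closedBall o (dist o x / 2)) := le_trans (hgleKD j) hj.le
      have hcle : c j ≤ dist o x / 2 :=
        (hc_props j hTj).2.2.2.2.2 _ (by linarith) hgle
      exact ⟨j, hTj, by linarith⟩
    -- upper bound for the candidate set
    have hbddabove : ∃ bnd : ℤ, ∀ j, (T j ∧ c j < dist o x) → j ≤ bnd := by
      obtain ⟨j₁, hj₁⟩ := hbig (m (closedBall o (dist o x))) (aux_f_lt_top m o hreg' _).ne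
      by_cases hT1 : T j₁
      · refine ⟨j₁, fun j hj => ?_⟩
        by_contra h
        push_neg at h
        have hc1 : c j₁ ≤ c j := hcmono' hT1 hj.1 h.le
        have h2 : dist o x < c j₁ := by
          by_contra h3
          push_neg at h3
          exact absurd (le_trans (hc_props j₁ hT1).2.1 (aux_f_mono m o h3))
            (not_le.2 hj₁)
        linarith [hj.2]
      · exact ⟨j₁, fun j hj => by
          by_contra h
          push_neg at h
          exact hT1 (hTdown h.le hj.1)⟩
    obtain ⟨j₂, ⟨hj₂T, hj₂c⟩, hj₂max⟩ := Int.exists_greatest_of_bdd hbddabove hj₀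
    refine mem_iUnion.2 ⟨j₂, hj₂T, hj₂c, fun hT1 => ?_⟩
    by_contra h
    push_neg at h
    exact absurd (hj₂max (j₂+1) ⟨hT1, h⟩) (by omega)
  have hcover_sub : (univ \ ⋃ j : ℤ, U j) ⊆ {o} := by
    intro x hx
    by_contra h
    exact hx.2 (hcover x h)
  -- the enlarged sets
  set Us : ℤ → Set X := fun j => U (j-1) ∪ U j ∪ U (j+1) with hUs_def
  have hUsmeas : ∀ j, MeasurableSet (Us j) :=
    fun j => ((hUmeas _).union (hUmeas _)).union (hUmeas _)
  have hUsub : ∀ j, U j ⊆ Us j :=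
    fun j => subset_union_left.trans' subset_union_right
  have hclUs : ∀ (a : ℤ) (x : X), x ∈ closure (Us a) →
      ∃ b : ℤ, a-1 ≤ b ∧ b ≤ a+1 ∧ x ∈ closure (U b) := by
    intro a x hx
    rw [hUs_def] at hx
    simp only [closure_union, mem_union] at hx
    rcases hx with (h | h) | h
    · exact ⟨a-1, by omega, by omega, h⟩
    · exact ⟨a, by omega, by omega, h⟩
    · exact ⟨a+1, by omega, by omega, h⟩
  -- bound on the measure of Us
  have hUsm : ∀ k, m (Us k) ≤ ENNReal.ofReal (24*d^4) * g k := by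
    intro k
    have hsum : m (Us k) ≤ m (U (k-1)) + m (U k) + m (U (k+1)) :=
      le_trans (measure_union_le _ _) (add_le_add_left (measure_union_le _ _) _)
    have h1 : ∀ a : ℤ, a ≤ k+1 → m (U a) ≤ ENNReal.ofReal (4*d^3) * g (k+1) :=
      fun a ha => le_trans (hUm_hi a) (mul_le_mul_right (hgmono ha) _)
    have hconst : (3:ℝ≥0∞) * (ENNReal.ofReal (4*d^3) * (K * g k)) =
        ENNReal.ofReal (24*d^4) * g k := by
      have e1 : ENNReal.ofReal (4*d^3) = 4 * (ENNReal.ofReal d)^3 := by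
        rw [ENNReal.ofReal_mul (by norm_num), ENNReal.ofReal_pow hd0.le, ENNReal.ofReal_ofNat]
      have e2 : ENNReal.ofReal (24*d^4) = 24 * (ENNReal.ofReal d)^4 := by
        rw [ENNReal.ofReal_mul (by norm_num), ENNReal.ofReal_pow hd0.le, ENNReal.ofReal_ofNat]
      rw [e1, e2, hK_def, hD_def]
      ring
    calc m (Us k) ≤ m (U (k-1)) + m (U k) + m (U (k+1)) := hsum
      _ ≤ ENNReal.ofReal (4*d^3) * g (k+1) + ENNReal.ofReal (4*d^3) * g (k+1) +
          ENNReal.ofReal (4*d^3) * g (k+1) :=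
          add_le_add (add_le_add (h1 _ (by omega)) (h1 _ (by omega))) (h1 _ (by omega))
      _ = 3 * (ENNReal.ofReal (4*d^3) * (K * g k)) := by rw [hgsucc]; ring
      _ = ENNReal.ofReal (24*d^4) * g k := hconst
  -- bound on μ of Us relative to a nearby annulus
  have hUsμ : ∀ k b : ℤ, T b → k ≤ b → b ≤ k+1 →
      μ (Us k) ≤ ENNReal.ofReal (3*((4*d^(n₀+2))^α * (Λ^3)^β * (16*d^5))) * μ (U b) := by
    intro k b hTb hkb hbk
    have hterm : ∀ a : ℤ, b ≤ a + 2 → a ≤ b + 2 →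
        μ (U a) ≤ ENNReal.ofReal ((4*d^(n₀+2))^α * (Λ^3)^β * (16*d^5)) * (Flo b * g b) := by
      intro a h1 h2
      by_cases hTa : T a
      · exact le_trans (hμ_hi a) (hkey a b hTa hTb h1 h2)
      · rw [hU_empty a hTa]
        simp
    have hsum : μ (Us k) ≤ μ (U (k-1)) + μ (U k) + μ (U (k+1)) :=
      le_trans (measure_union_le _ _) (add_le_add_left (measure_union_le _ _) _)
    calc μ (Us k) ≤ μ (U (k-1)) + μ (U k) + μ (U (k+1)) := hsum
      _ ≤ ENNReal.ofReal ((4*d^(n₀+2))^α * (Λ^3)^β * (16*d^5)) * (Flo b * g b) +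
          ENNReal.ofReal ((4*d^(n₀+2))^α * (Λ^3)^β * (16*d^5)) * (Flo b * g b) +
          ENNReal.ofReal ((4*d^(n₀+2))^α * (Λ^3)^β * (16*d^5)) * (Flo b * g b) :=
          add_le_add (add_le_add (hterm _ (by omega) (by omega)) (hterm _ (by omega) (by omega)))
            (hterm _ (by omega) (by omega))
      _ = ENNReal.ofReal 3 * ENNReal.ofReal ((4*d^(n₀+2))^α * (Λ^3)^β * (16*d^5)) *
          (Flo b * g b) := by
          rw [show ENNReal.ofReal 3 = (3:ℝ≥0∞) by norm_num]
          ring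
      _ = ENNReal.ofReal (3*((4*d^(n₀+2))^α * (Λ^3)^β * (16*d^5))) * (Flo b * g b) := by
          rw [← ENNReal.ofReal_mul (by norm_num)]
      _ ≤ ENNReal.ofReal (3*((4*d^(n₀+2))^α * (Λ^3)^β * (16*d^5))) * μ (U b) :=
          mul_le_mul_right (hμ_lo b hTb) _
  -- finally assemble the good covering
  refine
    { U := U
      Ustar := Us
      Usharp := Us
      countable := inferInstance
      measurable_U := hUmeas
      measurable_Ustar := hUsmeas
      measurable_Usharp := hUsmeas
      finite_m := ?_
      finite_mu := ?_
      U_subset_Ustar := hUsub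
      Ustar_subset_Usharp := fun i => subset_rfl
      cover_m := ?_
      cover_mu := ?_
      overlap_finite := ?_
      overlap_card := ?_
      chain := ?_ }
  · -- finite_m
    intro i
    refine lt_of_le_of_lt (hUsm i) ?_
    exact ENNReal.mul_lt_top (ENNReal.ofReal_lt_top) (hgt i).lt_top
  · -- finite_mu
    intro i
    have hterm : ∀ a : ℤ, μ (U a) < ∞ := by
      intro a
      by_cases hTa : T a
      · refine lt_of_le_of_lt (hμ_hi a) ?_
        exact ENNReal.mul_lt_top (hFhi_fin a hTa)
          (ENNReal.mul_lt_top ENNReal.ofReal_lt_top (hgt a).lt_top)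
      · rw [hU_empty a hTa]; simp
    refine lt_of_le_of_lt (le_trans (measure_union_le _ _)
      (add_le_add_left (measure_union_le _ _) _)) ?_
    exact ENNReal.add_lt_top.2 ⟨ENNReal.add_lt_top.2 ⟨hterm _, hterm _⟩, hterm _⟩
  · -- cover_m
    exact measure_mono_null hcover_sub ho
  · -- cover_mu
    refine measure_mono_null hcover_sub ?_
    rw [hμ_def, withDensity_apply F (measurableSet_singleton o)]
    exact setLIntegral_measure_zero _ _ ho
  · -- overlap_finite
    intro i
    refine Set.Finite.subset (Set.finite_Icc (i-3) (i+3)) ?_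
    rintro j ⟨x, hxj, hxi⟩
    obtain ⟨bj, hbj1, hbj2, hxbj⟩ := hclUs j x hxj
    obtain ⟨bi, hbi1, hbi2, hxbi⟩ := hclUs i x hxi
    have h1 := hadj bi bj x hxbi hxbj
    have h2 := hadj bj bi x hxbj hxbi
    simp only [Set.mem_Icc]
    omega
  · -- overlap_card
    intro i
    have hsub : {j : ℤ | (closure (Us j) ∩ closure (Us i)).Nonempty} ⊆ Icc (i-3) (i+3) := by
      rintro j ⟨x, hxj, hxi⟩
      obtain ⟨bj, hbj1, hbj2, hxbj⟩ := hclUs j x hxj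
      obtain ⟨bi, hbi1, hbi2, hxbi⟩ := hclUs i x hxi
      have h1 := hadj bi bj x hxbi hxbj
      have h2 := hadj bj bi x hxbj hxbi
      simp only [Set.mem_Icc]
      omega
    have hle : Nat.card {j : ℤ | (closure (Us j) ∩ closure (Us i)).Nonempty} ≤
        Nat.card (Icc (i-3) (i+3) : Set ℤ) :=
      Nat.card_mono (Set.finite_Icc _ _).to_subtype hsub
    have hIcc : Nat.card (Icc (i-3) (i+3) : Set ℤ) = 7 := by
      rw [Nat.card_coe_set_eq, ← Finset.coe_Icc, Set.ncard_coe_finset, Int.card_Icc]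
      omega
    rw [hIcc] at hle
    exact_mod_cast hle
  · -- chain
    intro i j hne
    obtain ⟨x, hxi, hxj⟩ := hne
    have hTi := hcl_T i x hxi
    have hTj := hcl_T j x hxj
    have hij1 := hadj i j x hxi hxj
    have hji1 := hadj j i x hxj hxi
    set k := min i j with hk_def
    have hki : k ≤ i := min_le_left _ _
    have hkj : k ≤ j := min_le_right _ _
    have hik : i ≤ k+1 := by omega
    have hjk : j ≤ k+1 := by omega
    have hTk : T k := hTdown hki hTi
    refine ⟨k, ?_, ?_, ?_⟩
    · -- U i ∪ U j ⊆ Us k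
      have hsub1 : ∀ a : ℤ, k ≤ a → a ≤ k+1 → U a ⊆ Us k := by
        intro a h1 h2
        rcases (by omega : a = k ∨ a = k+1) with rfl | rfl
        · exact subset_union_left.trans' subset_union_right
        · exact subset_union_right
      exact union_subset (hsub1 i hki hik) (hsub1 j hkj hjk)
    · -- m bound
      have hmin : g k ≤ min (m (U i)) (m (U j)) :=
        le_min (le_trans (hgmono hki) (hUm_lo i hTi))
          (le_trans (hgmono hkj) (hUm_lo j hTj))
      calc m (Us k) ≤ ENNReal.ofReal (24*d^4) * g k := hUsm k
        _ ≤ ENNReal.ofReal C₂ * min (m (U i)) (m (U j)) := by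
            refine mul_le_mul' (ENNReal.ofReal_le_ofReal ?_) hmin
            exact le_max_left _ _
    · -- μ bound
      obtain ⟨b, hbmem, hbeq⟩ : ∃ b : ℤ, (b = i ∨ b = j) ∧
          min (μ (U i)) (μ (U j)) = μ (U b) := by
        rcases le_total (μ (U i)) (μ (U j)) with h | h
        · exact ⟨i, Or.inl rfl, min_eq_left h⟩
        · exact ⟨j, Or.inr rfl, min_eq_right h⟩
      have hTb : T b := by rcases hbmem with rfl | rfl <;> assumption
      have hkb : k ≤ b := by rcases hbmem with rfl | rfl <;> omega
      have hbk : b ≤ k+1 := by rcases hbmem with rfl | rfl <;> omega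
      calc μ (Us k) ≤ ENNReal.ofReal (3*((4*d^(n₀+2))^α * (Λ^3)^β * (16*d^5))) * μ (U b) :=
            hUsμ k b hTb hkb hbk
        _ ≤ ENNReal.ofReal C₂ * min (μ (U i)) (μ (U j)) := by
            rw [hbeq]
            refine mul_le_mul' (ENNReal.ofReal_le_ofReal ?_) (le_refl _)
            exact le_max_right _ _
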